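/- Let m ≥ 4 and 3 ≤ i < m. Let P = T_{m−1} × {+1,−1} be the point set of the Fischer space 𝒟_m, with collinearity (x,ε) ∼ (y,η) iff x ≠ y and the supports of x,y share exactly one point, and with (x,ε)∧(y,η) = (x·y·x, εη) for collinear pairs. For a point p let τ(p): P → P be the map q ↦ p∧q if p ∼ q and q ↦ q otherwise, and let t_i: P → P be the map (x,ε) ↦ (x,−ε) if the support of x meets {1,…,i} in exactly one point and (x,ε) ↦ (x,ε) otherwise. Then for every bijection g: P → P preserving collinearity (p ∼ q ⟺ g(p) ∼ g(q)) and every point p ∈ P, t_i ≠ g ∘ τ(p) ∘ g⁻¹. (In particular the Miyamoto involution of id_{𝒟_i} is not conjugate to the Miyamoto involution of any point of 𝒟_m.) -/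

import Mathlib

open Equiv

instance {n : ℕ} : DecidablePred (Equiv.Perm.IsSwap : Equiv.Perm (Fin n) → Prop) := by
  intro σ; unfold Equiv.Perm.IsSwap; infer_instance

abbrev Tr (n : ℕ) : Type := {σ : Equiv.Perm (Fin (n + 1)) // σ.IsSwap}

/-- Two transpositions are collinear when their supports share exactly one point. -/
def Coll {n : ℕ} (s t : Tr n) : Prop :=
  (s.1.support ∩ t.1.support).card = 1

instance {n : ℕ} (s t : Tr n) : Decidable (Coll s t) := by
  unfold Coll; infer_instance

/-- The third point `s·t·s` of the line through collinear transpositions. -/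
def wedge {n : ℕ} (s t : Tr n) : Tr n :=
  ⟨s.1 * t.1 * s.1, by
    obtain ⟨x, y, hxy, ht⟩ := t.2
    obtain ⟨a, b, hab, hs⟩ := s.2
    have hinv : s.1⁻¹ = s.1 := by rw [hs]; exact Equiv.swap_inv a b
    exact ⟨s.1 x, s.1 y, fun h => hxy (s.1.injective h), by
      rw [ht, Equiv.swap_apply_apply, hinv]⟩⟩

/-- The point set of the Fischer space `𝒟_m`: pairs `(x, ε)` with `x` a transposition
of `Sym(m)` and `ε ∈ {+1, -1}`. -/
abbrev DPt (m : ℕ) : Type := Tr (m - 1) × ℤˣ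

/-- The Miyamoto involution `τ(p)` of a point `p` of `𝒟_m`, acting on points: it sends
each point collinear with `p` to the third point of their common line, and fixes all
other points. -/
def tau {m : ℕ} (p : DPt m) : DPt m → DPt m :=
  fun q => if Coll p.1 q.1 then (wedge p.1 q.1, p.2 * q.2) else q

/-- The Miyamoto involution `t_i` of `id_{𝒟_i}`, acting on points of `𝒟_m`: it flips
the sign of `(x, ε)` when the support of `x` meets `{1, …, i}` in exactly one point and
fixes `(x, ε)` otherwise. -/
def tI (m i : ℕ) : DPt m → DPt m :=
  fun p =>
    if (p.1.1.support.filter (fun a : Fin (m - 1 + 1) => (a : ℕ) < i)).card = 1 then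
      (p.1, -p.2)
    else p

section Aux
variable {n : ℕ}

lemma not_coll_self (s : {σ : Equiv.Perm (Fin (n + 1)) // σ.IsSwap}) :
    ¬ ((s.1.support ∩ s.1.support).card = 1) := by
  rw [Finset.inter_self, Equiv.Perm.card_support_eq_two.2 s.2]
  omega

lemma coll_wedge_aux (s t : Equiv.Perm (Fin (n + 1))) (hs : s.IsSwap) (ht : t.IsSwap)
    (h : (s.support ∩ t.support).card = 1) :
    (t.support ∩ (s * t * s).support).card = 1 := by
  obtain ⟨e, he⟩ := Finset.card_eq_one.1 h
  have hes : e ∈ s.support := by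
    have := he ▸ Finset.mem_singleton_self e; exact (Finset.mem_inter.1 this).1
  have het : e ∈ t.support := by
    have := he ▸ Finset.mem_singleton_self e; exact (Finset.mem_inter.1 this).2
  obtain ⟨x, y, hxy, hts⟩ := ht
  have htsupp : t.support = {x, y} := by rw [hts]; exact Equiv.Perm.support_swap hxy
  -- f : the other element of t.support
  have : ∃ f, f ≠ e ∧ t.support = {e, f} := by
    rw [htsupp] at het ⊢
    rcases Finset.mem_insert.1 het with rfl | hy
    · exact ⟨y, fun hf => hxy hf.symm, rfl⟩
    · have : e = y := Finset.mem_singleton.1 hy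
      subst this
      exact ⟨x, fun hf => hxy hf, by rw [Finset.pair_comm]⟩
  obtain ⟨f, hfe, hft⟩ := this
  have hfns : f ∉ s.support := by
    intro hf
    have : f ∈ s.support ∩ t.support := Finset.mem_inter.2 ⟨hf, by rw [hft]; simp⟩
    rw [he, Finset.mem_singleton] at this
    exact hfe this
  have hsf : s f = f := Equiv.Perm.notMem_support.1 hfns
  have hse : s e ≠ e := Equiv.Perm.mem_support.1 hes
  have hsinv : s⁻¹ = s := by obtain ⟨a, b, hab, rfl⟩ := hs; exact Equiv.swap_inv a b
  have hconj : (s * t * s).support = t.support.map s.toEmbedding := by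
    have : s * t * s = s * t * s⁻¹ := by rw [hsinv]
    rw [this]
    exact Equiv.Perm.support_conj (σ := s) (τ := t)
  have hmap : (s * t * s).support = {s e, f} := by
    rw [hconj, hft]
    ext z
    simp only [Finset.mem_map, Finset.mem_insert, Finset.mem_singleton,
      Equiv.toEmbedding_apply]
    constructor
    · rintro ⟨w, (rfl | rfl), rfl⟩
      · exact Or.inl rfl
      · exact Or.inr hsf
    · rintro (rfl | hz)
      · exact ⟨e, Or.inl rfl, rfl⟩
      · exact ⟨f, Or.inr rfl, by rw [hsf, hz]⟩
  have hsemem : s e ∈ s.support := Equiv.Perm.apply_mem_support.2 hes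
  have hsef : s e ≠ f := fun hx => hfns (hx ▸ hsemem)
  have : t.support ∩ (s * t * s).support = {f} := by
    rw [hft, hmap]
    ext z
    simp only [Finset.mem_inter, Finset.mem_insert, Finset.mem_singleton]
    constructor
    · rintro ⟨(rfl | rfl), (h2 | h2)⟩
      · exact absurd h2.symm hse
      · exact h2
      · exact absurd h2.symm hsef
      · rfl
    · rintro rfl
      exact ⟨Or.inr rfl, Or.inr rfl⟩
  rw [this, Finset.card_singleton]

end Aux

/-- for `m ≥ 4` and `3 ≤ i < m`, the Miyamoto involution `t_i` of
`id_{𝒟_i}` is not conjugate, under any collinearity-preserving bijection of the point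
set of `𝒟_m`, to the Miyamoto involution `τ(p)` of any point `p` of `𝒟_m`. -/
theorem tI_not_conjugate_to_point_involution (m i : ℕ) (hm : 4 ≤ m) (hi : 3 ≤ i)
    (him : i < m) :
    ∀ g : Equiv.Perm (DPt m),
      (∀ p q : DPt m, Coll p.1 q.1 ↔ Coll (g p).1 (g q).1) →
      ∀ p : DPt m, tI m i ≠ ⇑g ∘ tau p ∘ ⇑g.symm := by

  intro g hg p h
  have hb : i < m - 1 + 1 := by omega
  set a : Fin (m - 1 + 1) := ⟨0, by omega⟩ with ha
  set b : Fin (m - 1 + 1) := ⟨i, hb⟩ with hbdef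
  have hab : a ≠ b := by
    intro hh
    have : (0 : ℕ) = i := congrArg Fin.val hh
    omega
  set x : Tr (m - 1) := ⟨Equiv.swap a b, ⟨a, b, hab, rfl⟩⟩ with hx
  set q : DPt m := (x, 1) with hq
  have hsupp : x.1.support = {a, b} := Equiv.Perm.support_swap hab
  have hfilt : (x.1.support.filter (fun z : Fin (m - 1 + 1) => (z : ℕ) < i)).card = 1 := by
    rw [hsupp]
    have : ({a, b} : Finset (Fin (m - 1 + 1))).filter (fun z : Fin (m - 1 + 1) => (z : ℕ) < i) = {a} := by
      rw [Finset.filter_insert, if_pos (show (0 : ℕ) < i by omega : ((a : ℕ) < i)),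
        Finset.filter_singleton, if_neg (by simp [hbdef])]
      rfl
    rw [this, Finset.card_singleton]
  have htIq : tI m i q = (x, -1) := by
    unfold tI
    rw [if_pos hfilt]
  set r : DPt m := g.symm q with hr
  have hgr : g r = q := by simp [hr]
  have happ : tI m i q = g (tau p r) := by rw [h]; rfl
  have hne : tau p r ≠ r := by
    intro heq
    rw [heq, hgr, htIq] at happ
    have : (1 : ℤˣ) = -1 := congrArg Prod.snd happ.symm
    have h2 : (1 : ℤ) = -1 := congrArg (fun u : ℤˣ => (u : ℤ)) this
    omega
  have hcoll : Coll p.1 r.1 := by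
    by_contra hc
    exact hne (by unfold tau; rw [if_neg hc])
  have htaur : tau p r = (wedge p.1 r.1, p.2 * r.2) := by
    unfold tau; rw [if_pos hcoll]
  have hcoll2 : Coll r.1 (tau p r).1 := by
    rw [htaur]
    exact coll_wedge_aux p.1.1 r.1.1 p.1.2 r.1.2 hcoll
  have := (hg r (tau p r)).1 hcoll2
  rw [hgr, ← happ, htIq] at this
  exact not_coll_self x this
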